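/- The kernel of ρ_F equals the normal closure in F₂ of the three elements x³, y², and the commutator [x, y⁻¹xy] = x⁻¹(y⁻¹xy)⁻¹x(y⁻¹xy); moreover this kernel has index 18 in F₂ (equivalently, the image of ρ_F has order 18). -/

import Mathlib

set_option maxRecDepth 10000


open Equiv

/-- σ₀ = (1 2 3 7 8 9)(6 12); the point 12 is represented by `0 : Fin 12`. -/
def σ₀ : Equiv.Perm (Fin 12) := c[1, 2, 3, 7, 8, 9] * c[6, 0]

/-- σ₁ = (1 2 3 7 8 9)(4 10). -/
def σ₁ : Equiv.Perm (Fin 12) := c[1, 2, 3, 7, 8, 9] * c[4, 10]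

/-- σ₂ = (1 2 3 7 8 9)(5 11). -/
def σ₂ : Equiv.Perm (Fin 12) := c[1, 2, 3, 7, 8, 9] * c[5, 11]

/-- τ = (1 4)(2 5)(7 10)(8 11)(3 6 9 12); the point 12 is represented by `0 : Fin 12`. -/
def τ : Equiv.Perm (Fin 12) := c[1, 4] * c[2, 5] * c[7, 10] * c[8, 11] * c[3, 6, 9, 0]

def σ : Fin 3 → Equiv.Perm (Fin 12) := ![σ₀, σ₁, σ₂]

/-- The generator x of the free group F₂. -/
def x : FreeGroup (Fin 2) := FreeGroup.of 0

/-- The generator y of the free group F₂. -/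
def y : FreeGroup (Fin 2) := FreeGroup.of 1

/-- ρᵢ : F₂ → S₁₂ is determined by ρᵢ(x) = σᵢ and ρᵢ(y) = τ. -/
def ρ (i : Fin 3) : FreeGroup (Fin 2) →* Equiv.Perm (Fin 12) := FreeGroup.lift ![σ i, τ]

/-- ρ_F : F₂ → S₆ is determined by ρ_F(x) = (1 2 3) and ρ_F(y) = (1 4)(2 5)(3 6);
the points 1,…,6 are represented by 0,…,5 in `Fin 6`. -/
def ρF : FreeGroup (Fin 2) →* Equiv.Perm (Fin 6) :=
  FreeGroup.lift ![c[0, 1, 2], c[0, 3] * c[1, 4] * c[2, 5]]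

private def gx : Perm (Fin 6) := c[0,1,2]
private def gy : Perm (Fin 6) := c[0, 3] * c[1, 4] * c[2, 5]
private def gc : Perm (Fin 6) := gy⁻¹ * gx * gy
private def v : ZMod 3 × ZMod 3 × ZMod 2 → Perm (Fin 6) :=
  fun p => gx ^ p.1.val * gc ^ p.2.1.val * gy ^ p.2.2.val
private lemma hv_inj : Function.Injective v := by decide

private lemma hrx : ρF x = gx := by rw [ρF, x, FreeGroup.lift_apply_of]; rfl
private lemma hry : ρF y = gy := by rw [ρF, y, FreeGroup.lift_apply_of]; rfl
private lemma hrc : ρF (y⁻¹ * x * y) = gc := by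
  rw [map_mul, map_mul, map_inv, hrx, hry]; rfl

private lemma h18 : 18 ≤ Nat.card ρF.range := by
  have hmem : ∀ p, v p ∈ ρF.range := by
    intro p
    exact Subgroup.mul_mem _
      (Subgroup.mul_mem _ (Subgroup.pow_mem _ (MonoidHom.mem_range.mpr ⟨x, hrx⟩) _) (Subgroup.pow_mem _ (MonoidHom.mem_range.mpr ⟨y⁻¹ * x * y, hrc⟩) _))
      (Subgroup.pow_mem _ (MonoidHom.mem_range.mpr ⟨y, hry⟩) _)
  have hinj : Function.Injective (fun p => (⟨v p, hmem p⟩ : ρF.range)) :=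
    fun p q h => hv_inj (congrArg Subtype.val h)
  have := Nat.card_le_card_of_injective _ hinj
  simpa [Nat.card_prod, Nat.card_zmod] using this


private lemma pow_mod_eq {G : Type*} [Group G] (g : G) (m : ℕ) (h : g ^ m = 1) (n : ℕ) :
    g ^ (n % m) = g ^ n := by
  conv_rhs => rw [← Nat.div_add_mod n m]
  rw [pow_add, pow_mul, h, one_pow, one_mul]

private def Rset : Set (FreeGroup (Fin 2)) :=
  {x ^ 3, y ^ 2, x⁻¹ * (y⁻¹ * x * y)⁻¹ * x * (y⁻¹ * x * y)}

private def N : Subgroup (FreeGroup (Fin 2)) := Subgroup.normalClosure Rset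

instance : N.Normal := Subgroup.normalClosure_normal

private lemma index_N : N.index ≤ 18 ∧ N.index ≠ 0 := by
  let π : FreeGroup (Fin 2) →* FreeGroup (Fin 2) ⧸ N := QuotientGroup.mk' N
  set a : FreeGroup (Fin 2) ⧸ N := π x with ha_def
  set b : FreeGroup (Fin 2) ⧸ N := π y with hb_def
  set c : FreeGroup (Fin 2) ⧸ N := b⁻¹ * a * b with hc_def
  have mem1 : x ^ 3 ∈ N := Subgroup.subset_normalClosure (by left; rfl)
  have mem2 : y ^ 2 ∈ N := Subgroup.subset_normalClosure (by right; left; rfl)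
  have mem3 : x⁻¹ * (y⁻¹ * x * y)⁻¹ * x * (y⁻¹ * x * y) ∈ N :=
    Subgroup.subset_normalClosure (by right; right; rfl)
  have ha3 : a ^ 3 = 1 := by
    rw [ha_def, ← map_pow]; exact (QuotientGroup.eq_one_iff _).2 mem1
  have hb2 : b ^ 2 = 1 := by
    rw [hb_def, ← map_pow]; exact (QuotientGroup.eq_one_iff _).2 mem2
  have hbinv : b⁻¹ = b := by
    rw [inv_eq_iff_mul_eq_one, ← sq]; exact hb2
  have key : a⁻¹ * c⁻¹ * a * c = 1 := by
    have h := (QuotientGroup.eq_one_iff (x⁻¹ * (y⁻¹ * x * y)⁻¹ * x * (y⁻¹ * x * y))).2 mem3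
    simpa [map_mul, map_inv, hc_def, ha_def, hb_def, π] using h
  have hco : Commute a c := by
    have h2 : c * a * (a⁻¹ * c⁻¹ * a * c) = c * a := by rw [key, mul_one]
    have h3 : a * c = c * a * (a⁻¹ * c⁻¹ * a * c) := by group
    unfold Commute SemiconjBy
    rw [h3, h2]
  have hc3 : c ^ 3 = 1 := by
    have : c ^ 3 = b⁻¹ * a ^ 3 * (b⁻¹)⁻¹ := by
      rw [← conj_pow]; rw [hc_def]; rw [inv_inv]
    rw [this, ha3, mul_one, inv_inv, inv_mul_cancel]
  have hba1 : b * a = c * b := by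
    rw [hc_def, hbinv]
    calc b * a = b * a * (b * b) := by rw [← sq, hb2, mul_one]
    _ = b * a * b * b := by rw [mul_assoc (b*a)]
  have hbc1 : b * c = a * b := by
    rw [hc_def]
    calc b * (b⁻¹ * a * b) = (b * b⁻¹) * a * b := by simp [mul_assoc]
    _ = a * b := by simp
  have hbak : ∀ k : ℕ, b * a ^ k = c ^ k * b := by
    intro k; induction k with
    | zero => simp
    | succ k ih =>
      rw [pow_succ, pow_succ, ← mul_assoc, ih, mul_assoc, hba1, ← mul_assoc]
  have hbck : ∀ k : ℕ, b * c ^ k = a ^ k * b := by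
    intro k; induction k with
    | zero => simp
    | succ k ih =>
      rw [pow_succ, pow_succ, ← mul_assoc, ih, mul_assoc, hbc1, ← mul_assoc]
  set f : ZMod 3 × ZMod 3 × ZMod 2 → FreeGroup (Fin 2) ⧸ N :=
    fun p => a ^ p.1.val * c ^ p.2.1.val * b ^ p.2.2.val with hf_def
  have hacpow : ∀ n m : ℕ, a ^ n * c ^ m = c ^ m * a ^ n := fun n m =>
    (hco.pow_pow n m).eq
  have hfa : ∀ i k : ZMod 3, a ^ (i + k).val = a ^ i.val * a ^ k.val := by
    intro i k
    rw [ZMod.val_add, pow_mod_eq a 3 ha3, pow_add]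
  have hfc : ∀ i k : ZMod 3, c ^ (i + k).val = c ^ i.val * c ^ k.val := by
    intro i k
    rw [ZMod.val_add, pow_mod_eq c 3 hc3, pow_add]
  have hfb : ∀ i k : ZMod 2, b ^ (i + k).val = b ^ i.val * b ^ k.val := by
    intro i k
    rw [ZMod.val_add, pow_mod_eq b 2 hb2, pow_add]
  have hmul : ∀ p q, ∃ r, f p * f q = f r := by
    rintro ⟨i, j, e⟩ ⟨k, l, m⟩
    have he' : ∀ t : ZMod 2, t = 0 ∨ t = 1 := by decide
    rcases he' e with he | he
    · refine ⟨(i + k, j + l, m), ?_⟩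
      simp only [hf_def, he, hfa, hfc]
      have : (0 : ZMod 2).val = 0 := rfl
      rw [this, pow_zero, mul_one]
      calc a ^ i.val * c ^ j.val * (a ^ k.val * c ^ l.val * b ^ m.val)
          = a ^ i.val * (c ^ j.val * a ^ k.val) * c ^ l.val * b ^ m.val := by
            simp [mul_assoc]
        _ = a ^ i.val * (a ^ k.val * c ^ j.val) * c ^ l.val * b ^ m.val := by
            rw [← hacpow]
        _ = a ^ i.val * a ^ k.val * (c ^ j.val * c ^ l.val) * b ^ m.val := by
            simp [mul_assoc]
    · refine ⟨(i + l, j + k, 1 + m), ?_⟩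
      simp only [hf_def, he, hfa, hfc, hfb]
      have h1 : (1 : ZMod 2).val = 1 := rfl
      rw [h1, pow_one]
      have hswap : (c ^ j.val * c ^ k.val) * a ^ l.val = a ^ l.val * (c ^ j.val * c ^ k.val) := by
        rw [← pow_add, ← hacpow]
      calc a ^ i.val * c ^ j.val * b * (a ^ k.val * c ^ l.val * b ^ m.val)
          = a ^ i.val * c ^ j.val * ((b * a ^ k.val) * (c ^ l.val * b ^ m.val)) := by
            simp [mul_assoc]
        _ = a ^ i.val * c ^ j.val * (c ^ k.val * ((b * c ^ l.val) * b ^ m.val)) := by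
            rw [hbak]; simp [mul_assoc]
        _ = a ^ i.val * c ^ j.val * (c ^ k.val * (a ^ l.val * (b * b ^ m.val))) := by
            rw [hbck]; simp [mul_assoc]
        _ = a ^ i.val * ((c ^ j.val * c ^ k.val) * a ^ l.val) * (b * b ^ m.val) := by
            simp [mul_assoc]
        _ = a ^ i.val * (a ^ l.val * (c ^ j.val * c ^ k.val)) * (b * b ^ m.val) := by
            rw [hswap]
        _ = a ^ i.val * a ^ l.val * (c ^ j.val * c ^ k.val) * (b * b ^ m.val) := by
            simp [mul_assoc]
  have hsurj : Function.Surjective f := by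
    intro q
    obtain ⟨g, rfl⟩ := QuotientGroup.mk'_surjective N q
    induction g using FreeGroup.induction_on with
    | C1 => exact ⟨(0, 0, 0), by simp [hf_def]⟩
    | of i =>
      fin_cases i
      · exact ⟨(1, 0, 0), by simp [hf_def, ha_def]; rfl⟩
      · exact ⟨(0, 0, 1), by simp [hf_def, hb_def]; rfl⟩
    | inv_of i _ =>
      fin_cases i
      · refine ⟨(2, 0, 0), ?_⟩
        have hinv : a⁻¹ = a ^ 2 := by
          rw [inv_eq_iff_mul_eq_one, ← pow_succ']; exact ha3
        have hval : f (2, 0, 0) = a ^ 2 := by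
          show a ^ (2 : ZMod 3).val * c ^ (0 : ZMod 3).val * b ^ (0 : ZMod 2).val = a ^ 2
          rw [show (2 : ZMod 3).val = 2 from rfl, show (0 : ZMod 3).val = 0 from rfl,
            show (0 : ZMod 2).val = 0 from rfl, pow_zero, pow_zero, mul_one, mul_one]
        rw [hval, ← hinv, map_inv]
        rfl
      · refine ⟨(0, 0, 1), ?_⟩
        have hval : f (0, 0, 1) = b := by
          show a ^ (0 : ZMod 3).val * c ^ (0 : ZMod 3).val * b ^ (1 : ZMod 2).val = b
          rw [show (0 : ZMod 3).val = 0 from rfl, show (1 : ZMod 2).val = 1 from rfl,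
            pow_zero, pow_zero, pow_one, one_mul, one_mul]
        rw [hval, map_inv]
        show b = b⁻¹
        rw [hbinv]
    | mul g h ihg ihh =>
      obtain ⟨p, hp⟩ := ihg
      obtain ⟨q, hq⟩ := ihh
      obtain ⟨r, hr⟩ := hmul p q
      exact ⟨r, by rw [map_mul, ← hp, ← hq, hr]⟩
  constructor
  · have := Nat.card_le_card_of_surjective f hsurj
    rw [Subgroup.index_eq_card]; simpa using this
  · have : Finite (FreeGroup (Fin 2) ⧸ N) := Finite.of_surjective f hsurj
    exact Subgroup.index_ne_zero_of_finite

private lemma hNker : N ≤ ρF.ker := by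
  apply Subgroup.normalClosure_le_normal
  rintro g (rfl | rfl | rfl)
  · exact MonoidHom.mem_ker.mpr (by rw [map_pow, hrx]; decide)
  · exact MonoidHom.mem_ker.mpr (by rw [map_pow, hry]; decide)
  · exact MonoidHom.mem_ker.mpr (by
      simp only [map_mul, map_inv, hrx, hry]; decide)

/-- ker ρ_F is the normal closure of {x³, y², x⁻¹(y⁻¹xy)⁻¹x(y⁻¹xy)} and has index 18 in F₂
(equivalently, the image of ρ_F has order 18). -/

theorem stmt_5 :
    ρF.ker = Subgroup.normalClosure
        {x ^ 3, y ^ 2, x⁻¹ * (y⁻¹ * x * y)⁻¹ * x * (y⁻¹ * x * y)} ∧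
      (ρF.ker).index = 18 ∧ Nat.card ρF.range = 18 := by
  obtain ⟨hle, hne⟩ := index_N
  have hidx := Subgroup.index_ker ρF
  have hdvd : ρF.ker.index ∣ N.index := Subgroup.index_dvd_of_le hNker
  have h1 : 18 ≤ ρF.ker.index := by rw [hidx]; exact h18
  have h2 : ρF.ker.index ≤ N.index := Nat.le_of_dvd (Nat.pos_of_ne_zero hne) hdvd
  have hNi : N.index = 18 := le_antisymm hle (h1.trans h2)
  have hki : ρF.ker.index = 18 := le_antisymm (hNi ▸ h2) h1
  have hrel := Subgroup.relIndex_mul_index hNker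
  rw [hki, hNi] at hrel
  have hone : N.relIndex ρF.ker = 1 := by omega
  have hker_le : ρF.ker ≤ N := Subgroup.relIndex_eq_one.mp hone
  exact ⟨le_antisymm hker_le hNker, hki, by rw [← hidx]; exact hki⟩
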